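/- Let Ω ⊂ ℂ^n be a domain, B(0,r) a ball, and F : Ω ∩ B(0,r) → ℂ^n holomorphic with |dF(z)| ≤ C dist(z, ∂Ω)^{-1+1/(2m)}. Suppose a, b ∈ Ω ∩ B(0, r/2) can be joined by a smooth path γ : [0, 3s] → Ω with s = |a−b|, |γ'(t)| ≤ C, and dist(γ(t), ∂Ω) ≥ C min(t, s, 3s−t). Then |F(a) − F(b)| ≤ C' s^{1/(2m)} for a constant C' depending only on C and m. (Hölder-1/(2m) continuity along such paths.) -/

import Mathlib

open MeasureTheory Set

/-- Hölder-`1/(2m)` continuity along good paths.  If `F` is holomorphic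
on `Ω ∩ B(0,r)` with `‖dF(z)‖ ≤ C dist(z,∂Ω)^{-1+1/(2m)}`, then there is `C' > 0`
(depending only on `C` and `m`) such that whenever `a, b ∈ Ω ∩ B(0,r/2)` are joined by
a `C¹` path `γ : [0,3s] → Ω ∩ B(0,r)` (`s = |a-b|`) with `‖γ'‖ ≤ C` and
`dist(γ(t),∂Ω) ≥ C·min(t,s,3s−t)`, one has `|F a − F b| ≤ C' s^{1/(2m)}`. -/
theorem stmt11 {n : ℕ} (Ω : Set (EuclideanSpace ℂ (Fin n))) (hΩ : IsOpen Ω)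
    (r : ℝ) (hr : 0 < r) (m : ℕ) (hm : 1 ≤ m)
    (F : EuclideanSpace ℂ (Fin n) → EuclideanSpace ℂ (Fin n))
    (hF : DifferentiableOn ℂ F (Ω ∩ Metric.ball 0 r))
    (C : ℝ) (hC : 0 < C)
    (hdF : ∀ z ∈ Ω ∩ Metric.ball (0 : EuclideanSpace ℂ (Fin n)) r,
      ‖fderiv ℂ F z‖ ≤ C * Metric.infDist z Ωᶜ ^ (-1 + 1 / (2 * (m : ℝ)))) :
    ∃ C' : ℝ, 0 < C' ∧
      ∀ a b : EuclideanSpace ℂ (Fin n),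
        a ∈ Ω ∩ Metric.ball 0 (r / 2) → b ∈ Ω ∩ Metric.ball 0 (r / 2) →
        ∀ γ : ℝ → EuclideanSpace ℂ (Fin n),
          ContDiffOn ℝ 1 γ (Set.Icc 0 (3 * dist a b)) →
          γ 0 = a → γ (3 * dist a b) = b →
          Set.MapsTo γ (Set.Icc 0 (3 * dist a b)) (Ω ∩ Metric.ball 0 r) →
          (∀ t ∈ Set.Icc (0:ℝ) (3 * dist a b), ‖deriv γ t‖ ≤ C) →
          (∀ t ∈ Set.Icc (0:ℝ) (3 * dist a b),
            C * min t (min (dist a b) (3 * dist a b - t)) ≤ Metric.infDist (γ t) Ωᶜ) →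
          dist (F a) (F b) ≤ C' * dist a b ^ (1 / (2 * (m : ℝ))) := by
  have hmpos : (0:ℝ) < (m:ℝ) := by exact_mod_cast Nat.lt_of_lt_of_le Nat.zero_lt_one hm
  set α : ℝ := 1 / (2 * (m:ℝ)) with hαdef
  have hα : 0 < α := by positivity
  have hαle : α ≤ 1/2 := by
    rw [hαdef]
    rw [div_le_div_iff₀ (by positivity) (by norm_num)]
    have : (1:ℝ) ≤ (m:ℝ) := by exact_mod_cast hm
    linarith
  set β : ℝ := -1 + α with hβdef
  have hβ0 : β ≤ 0 := by rw [hβdef]; linarith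
  have hβgt : (-1:ℝ) < β := by rw [hβdef]; linarith
  have h3α : (0:ℝ) < 3 ^ α := Real.rpow_pos_of_pos (by norm_num) _
  have hCβ : (0:ℝ) < C ^ β := Real.rpow_pos_of_pos hC _
  refine ⟨C^2 * C^β * (2 * 3^α / α + 3), by positivity, ?_⟩
  intro a b ha hb γ hγ hγ0 hγ1 hmaps hγ' hdist
  set s := dist a b with hsdef
  rcases (dist_nonneg : 0 ≤ s).eq_or_lt with hs | hs
  · have hab : a = b := dist_eq_zero.mp hs.symm
    have h0 : dist (F a) (F b) = 0 := by rw [hab, dist_self]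
    rw [h0]
    have hsnn : (0:ℝ) ≤ s := dist_nonneg
    have := Real.rpow_nonneg hsnn α
    positivity
  · borelize (EuclideanSpace ℂ (Fin n))
    set T := 3 * s with hTdef
    have hT : 0 < T := by rw [hTdef]; linarith
    have hopen : IsOpen (Ω ∩ Metric.ball 0 r) := hΩ.inter Metric.isOpen_ball
    have hγc : ContinuousOn γ (Set.Icc 0 T) := hγ.continuousOn
    set g' : ℝ → EuclideanSpace ℂ (Fin n) := fun t => fderiv ℂ F (γ t) (deriv γ t) with hg'def
    have key : ∀ t ∈ Set.Ioo (0:ℝ) T, HasDerivAt (F ∘ γ) (g' t) t := by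
      intro t ht
      have htI : t ∈ Set.Icc 0 T := Set.Ioo_subset_Icc_self ht
      have hmem := hmaps htI
      have hFz : DifferentiableAt ℂ F (γ t) := hF.differentiableAt (hopen.mem_nhds hmem)
      have hγt : HasDerivAt γ (deriv γ t) t := by
        have h1 : DifferentiableWithinAt ℝ γ (Set.Icc 0 T) t := (hγ.differentiableOn one_ne_zero) t htI
        exact (h1.differentiableAt (Icc_mem_nhds ht.1 ht.2)).hasDerivAt
      exact (hFz.hasFDerivAt.restrictScalars ℝ).comp_hasDerivAt t hγt
    -- measurability of g' on (0,T)
    have hg'meas : AEStronglyMeasurable g' (volume.restrict (Set.Ioo (0:ℝ) T)) := by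
      have h1 : AEMeasurable (fun t => fderiv ℂ F (γ t)) (volume.restrict (Set.Ioo (0:ℝ) T)) :=
        (measurable_fderiv ℂ F).comp_aemeasurable
          (((hγc.mono Set.Ioo_subset_Icc_self).aemeasurable measurableSet_Ioo))
      have h2 : AEMeasurable (fun t => deriv γ t) (volume.restrict (Set.Ioo (0:ℝ) T)) :=
        (measurable_deriv γ).aemeasurable
      exact ((isBoundedBilinearMap_apply.continuous.measurable.comp_aemeasurable
        (h1.prodMk h2))).aestronglyMeasurable
    set K := C^2 * C^β with hKdef
    have hK : 0 < K := by positivity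
    set ψ : ℝ → ℝ := fun t => K * (t ^ β + s ^ β + (T - t) ^ β) with hψdef
    have hint1 : IntervalIntegrable (fun t : ℝ => t ^ β) volume 0 T :=
      intervalIntegral.intervalIntegrable_rpow' hβgt
    have hint2 : IntervalIntegrable (fun _ : ℝ => s ^ β) volume 0 T := intervalIntegrable_const
    have hint3 : IntervalIntegrable (fun t : ℝ => (T - t) ^ β) volume 0 T := by
      have := (intervalIntegral.intervalIntegrable_rpow' (a := 0) (b := T) hβgt).comp_sub_left T
      simpa using this.symm
    have hψint : IntervalIntegrable ψ volume 0 T :=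
      (((hint1.add hint2).add hint3).const_mul K)
    -- pointwise bound
    have hbound : ∀ t ∈ Set.Ioo (0:ℝ) T, ‖g' t‖ ≤ ψ t := by
      intro t ht
      have htI : t ∈ Set.Icc 0 T := Set.Ioo_subset_Icc_self ht
      have hmem := hmaps htI
      have hμpos : 0 < min t (min s (T - t)) :=
        lt_min ht.1 (lt_min hs (by linarith [ht.2]))
      have hdle := hdist t htI
      have hCμ : 0 < C * min t (min s (T - t)) := mul_pos hC hμpos
      have hdpos : 0 < Metric.infDist (γ t) Ωᶜ := lt_of_lt_of_le hCμ hdle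
      have h1 : ‖fderiv ℂ F (γ t)‖ ≤ C * Metric.infDist (γ t) Ωᶜ ^ β := hdF _ hmem
      have h2 : Metric.infDist (γ t) Ωᶜ ^ β ≤ (C * min t (min s (T - t))) ^ β :=
        Real.rpow_le_rpow_of_nonpos hCμ hdle hβ0
      have h3 : (C * min t (min s (T - t))) ^ β = C ^ β * (min t (min s (T - t))) ^ β :=
        Real.mul_rpow hC.le hμpos.le
      have ht' : (0:ℝ) ≤ t ^ β := Real.rpow_nonneg ht.1.le β
      have hs' : (0:ℝ) ≤ s ^ β := Real.rpow_nonneg hs.le β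
      have hT' : (0:ℝ) ≤ (T - t) ^ β := Real.rpow_nonneg (by linarith [ht.2]) β
      have h4 : (min t (min s (T - t))) ^ β ≤ t ^ β + s ^ β + (T - t) ^ β := by
        rcases min_cases t (min s (T - t)) with ⟨h, _⟩ | ⟨h, _⟩
        · rw [h]; linarith
        · rcases min_cases s (T - t) with ⟨h2', _⟩ | ⟨h2', _⟩
          · rw [h, h2']; linarith
          · rw [h, h2']; linarith
      have h5 : ‖deriv γ t‖ ≤ C := hγ' t htI
      have h6 : ‖g' t‖ ≤ ‖fderiv ℂ F (γ t)‖ * ‖deriv γ t‖ :=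
        ContinuousLinearMap.le_opNorm _ _
      have h7 : ‖fderiv ℂ F (γ t)‖ ≤ C * (C ^ β * (t ^ β + s ^ β + (T - t) ^ β)) := by
        refine h1.trans (mul_le_mul_of_nonneg_left ?_ hC.le)
        calc Metric.infDist (γ t) Ωᶜ ^ β ≤ (C * min t (min s (T - t))) ^ β := h2
          _ = C ^ β * (min t (min s (T - t))) ^ β := h3
          _ ≤ C ^ β * (t ^ β + s ^ β + (T - t) ^ β) :=
              mul_le_mul_of_nonneg_left h4 hCβ.le
      calc ‖g' t‖ ≤ ‖fderiv ℂ F (γ t)‖ * ‖deriv γ t‖ := h6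
        _ ≤ (C * (C ^ β * (t ^ β + s ^ β + (T - t) ^ β))) * C := by
            refine mul_le_mul h7 h5 (norm_nonneg _) ?_
            positivity
        _ = ψ t := by rw [hψdef]; simp only; rw [hKdef]; ring
    have hae : ∀ᵐ t ∂volume.restrict (Set.uIoc (0:ℝ) T), ‖g' t‖ ≤ ψ t := by
      rw [Set.uIoc_of_le hT.le, ← Measure.restrict_congr_set Ioo_ae_eq_Ioc]
      exact (ae_restrict_iff' measurableSet_Ioo).2
        (Filter.Eventually.of_forall fun t ht => hbound t ht)
    have hg'int : IntervalIntegrable g' volume 0 T := by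
      refine hψint.mono_fun ?_ ?_
      · rw [Set.uIoc_of_le hT.le, ← Measure.restrict_congr_set Ioo_ae_eq_Ioc]
        exact hg'meas
      · refine hae.mono fun t h => h.trans ?_
        exact le_abs_self _
    have hgcont : ContinuousOn (F ∘ γ) (Set.Icc 0 T) := hF.continuousOn.comp hγc hmaps
    have hFTC : ∫ t in (0:ℝ)..T, g' t = (F ∘ γ) T - (F ∘ γ) 0 :=
      intervalIntegral.integral_eq_sub_of_hasDeriv_right_of_le hT.le hgcont
        (fun t ht => (key t ht).hasDerivWithinAt) hg'int
    have hnorm : dist (F a) (F b) = ‖∫ t in (0:ℝ)..T, g' t‖ := by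
      rw [hFTC]
      simp only [Function.comp_apply, hγ0, hγ1]
      rw [dist_eq_norm']
    have hle : ‖∫ t in (0:ℝ)..T, g' t‖ ≤ |∫ t in (0:ℝ)..T, ψ t| :=
      intervalIntegral.norm_integral_le_abs_of_norm_le hae hψint
    -- compute the integral of ψ
    have hI1 : ∫ t in (0:ℝ)..T, t ^ β = T ^ α / α := by
      rw [integral_rpow (Or.inl hβgt)]
      rw [show β + 1 = α by rw [hβdef]; ring]
      rw [Real.zero_rpow (ne_of_gt hα)]
      ring
    have hI3 : ∫ t in (0:ℝ)..T, (T - t) ^ β = T ^ α / α := by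
      rw [intervalIntegral.integral_comp_sub_left (fun u : ℝ => u ^ β) T]
      simpa using hI1
    have hI2 : ∫ _t in (0:ℝ)..T, s ^ β = T * s ^ β := by
      simp
    have hψval : ∫ t in (0:ℝ)..T, ψ t = K * (2 * (T ^ α / α) + T * s ^ β) := by
      simp only [hψdef]
      rw [intervalIntegral.integral_const_mul,
        intervalIntegral.integral_add (hint1.add hint2) hint3,
        intervalIntegral.integral_add hint1 hint2, hI1, hI2, hI3]
      ring
    have hψnn : 0 ≤ ∫ t in (0:ℝ)..T, ψ t := by
      rw [hψval]
      have h1 : (0:ℝ) ≤ T ^ α := Real.rpow_nonneg hT.le α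
      have h2 : (0:ℝ) ≤ s ^ β := Real.rpow_nonneg hs.le β
      positivity
    have hss : s * s ^ β = s ^ α := by
      rw [show α = 1 + β by rw [hβdef]; ring, Real.rpow_add hs 1 β, Real.rpow_one]
    calc dist (F a) (F b) = ‖∫ t in (0:ℝ)..T, g' t‖ := hnorm
      _ ≤ |∫ t in (0:ℝ)..T, ψ t| := hle
      _ = K * (2 * (T ^ α / α) + T * s ^ β) := by rw [abs_of_nonneg hψnn, hψval]
      _ = C^2 * C^β * (2 * 3^α / α + 3) * s ^ α := by
          rw [hKdef, hTdef, Real.mul_rpow (by norm_num) hs.le]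
          linear_combination (3 * (C^2 * C^β)) * hss
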